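/- arXiv:2212.11909 — 3 statements merged into one kernel-verified Lean document; each statement's English description precedes it below -/
import Mathlib

section
/- Let T ∈ (0, ∞], let y : [0, T) → [0, ∞) be absolutely continuous on compact subintervals, let G ∈ L¹(0, T) with G(t) ≥ 0, let c₁, c₂ ∈ [0, ∞) and α > 1, and suppose that y′(t) ≤ G(t) + c₁ y(t) + c₂ y(t)^α for almost every t ∈ (0, T). Set M := 2·max{1, c₁, c₂}. Then there exists η > 0 (depending only on c₁, c₂, α) such that: if y(0) + ∫₀ᵀ G(s) ds + ∫₀ᵀ y(s) ds ≤ η, then y ∈ L^∞(0, T) and y(t) < M·η for all t ∈ [0, T). -/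
/-!
Statement 0: Generalized Gronwall lemma (Lemma 4.3 of the paper), boundedness part.

`T ∈ (0,∞]` is encoded as `T : ℝ≥0∞` with `0 < T`; the interval `[0,T)` is the set
of real `t ≥ 0` with `ENNReal.ofReal t < T`, and `(0,T)` analogously.
Absolute continuity of `y` on compact subintervals of `[0,T)` is encoded through the
fundamental theorem of calculus: there is a locally integrable a.e. derivative `y'`
such that `y b = y a + ∫_a^b y'` for all `0 ≤ a ≤ b < T`.
The constant `η` depends only on `c₁, c₂, α`.
-/

open MeasureTheory Set Filter ENNReal

theorem gronwall_bound (c₁ c₂ : ℝ) (hc₁ : 0 ≤ c₁) (hc₂ : 0 ≤ c₂)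
    (α : ℝ) (hα : 1 < α) :
    ∃ η > (0 : ℝ), ∀ (T : ℝ≥0∞), 0 < T → ∀ (y y' G : ℝ → ℝ),
      -- y takes values in [0,∞) on [0,T)
      (∀ t : ℝ, 0 ≤ t → ENNReal.ofReal t < T → 0 ≤ y t) →
      -- y is absolutely continuous on compact subintervals of [0,T),
      -- with a.e. derivative y'
      (∀ a b : ℝ, 0 ≤ a → a ≤ b → ENNReal.ofReal b < T →
        IntervalIntegrable y' volume a b ∧ y b = y a + ∫ t in a..b, y' t) →
      -- G ≥ 0 and G ∈ L¹(0,T)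
      (∀ t : ℝ, 0 ≤ G t) →
      IntegrableOn G {t : ℝ | 0 < t ∧ ENNReal.ofReal t < T} volume →
      -- y ∈ L¹(0,T)
      IntegrableOn y {t : ℝ | 0 < t ∧ ENNReal.ofReal t < T} volume →
      -- the differential inequality, a.e. on (0,T)
      (∀ᵐ t ∂volume, 0 < t → ENNReal.ofReal t < T →
        y' t ≤ G t + c₁ * y t + c₂ * y t ^ α) →
      -- smallness of the data
      y 0 + (∫ s in {t : ℝ | 0 < t ∧ ENNReal.ofReal t < T}, G s) +
          (∫ s in {t : ℝ | 0 < t ∧ ENNReal.ofReal t < T}, y s) ≤ η →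
      -- conclusion: y ∈ L^∞(0,T) and y(t) < M·η on [0,T), M := 2 max{1,c₁,c₂}
      MemLp y ⊤ (volume.restrict {t : ℝ | 0 < t ∧ ENNReal.ofReal t < T}) ∧
        ∀ t : ℝ, 0 ≤ t → ENNReal.ofReal t < T →
          y t < (2 * max 1 (max c₁ c₂)) * η := by
  set M : ℝ := 2 * max 1 (max c₁ c₂) with hMdef
  have hM2 : 2 ≤ M := by
    have h : (1:ℝ) ≤ max 1 (max c₁ c₂) := le_max_left _ _
    nlinarith
  have hMc₁ : 2 * c₁ ≤ M := by
    have h : c₁ ≤ max 1 (max c₁ c₂) := le_trans (le_max_left _ _) (le_max_right _ _)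
    nlinarith
  have hMc₂ : 2 * c₂ ≤ M := by
    have h : c₂ ≤ max 1 (max c₁ c₂) := le_trans (le_max_right _ _) (le_max_right _ _)
    nlinarith
  have hMpos : 0 < M := by linarith
  refine ⟨(2*M)⁻¹, by positivity, ?_⟩
  set η : ℝ := (2*M)⁻¹ with hηdef
  have hηpos : 0 < η := by positivity
  have hMη : M * η = 1/2 := by
    rw [hηdef]; field_simp
  set r : ℝ := (1/2 : ℝ) ^ (α - 1) with hrdef
  have hr0 : 0 ≤ r := Real.rpow_nonneg (by norm_num) _
  have hr1 : r < 1 := Real.rpow_lt_one (by norm_num) (by norm_num) (by linarith)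
  set L : ℝ := c₁ + c₂ * r with hLdef
  have hL0 : 0 ≤ L := by positivity
  have hLM : L < M := by nlinarith
  intro T hT y y' G hy0 hAC hG hGint hyint hineq hsmall
  set D : Set ℝ := {t : ℝ | 0 < t ∧ ENNReal.ofReal t < T} with hDdef
  have measD : MeasurableSet D := by
    have hDeq : D = Ioi (0:ℝ) ∩ (fun t => ENNReal.ofReal t) ⁻¹' (Iio T) := rfl
    rw [hDeq]
    exact measurableSet_Ioi.inter (ENNReal.measurable_ofReal measurableSet_Iio)
  have hyD0 : ∀ t ∈ D, 0 ≤ y t := fun t ht => hy0 t ht.1.le ht.2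
  have hGD : 0 ≤ ∫ s in D, G s := setIntegral_nonneg measD fun t _ => hG t
  have hyD : 0 ≤ ∫ s in D, y s := setIntegral_nonneg measD hyD0
  have h0T : ENNReal.ofReal 0 < T := by simpa using hT
  have hy00 : 0 ≤ y 0 := hy0 0 le_rfl h0T
  have hy0η : y 0 ≤ η := by linarith
  have hηMη : η < M * η := by nlinarith
  have key : ∀ b : ℝ, 0 ≤ b → ENNReal.ofReal b < T → y b < M * η := by
    intro b hb0 hbT
    by_contra hcon
    push_neg at hcon
    -- y is continuous on Icc 0 b
    have hy'ii : IntervalIntegrable y' volume 0 b := (hAC 0 b le_rfl hb0 hbT).1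
    have hcont : ContinuousOn y (Icc 0 b) := by
      have h1 : ContinuousOn (fun x => y 0 + ∫ t in (0:ℝ)..x, y' t) (Icc 0 b) := by
        have := intervalIntegral.continuousOn_primitive_interval'
          (μ := volume) (f := y') (a := 0) hy'ii left_mem_uIcc
        rw [uIcc_of_le hb0] at this
        exact continuousOn_const.add this
      refine h1.congr fun t ht => ?_
      exact (hAC 0 t le_rfl ht.1 (lt_of_le_of_lt (ENNReal.ofReal_le_ofReal ht.2) hbT)).2
    set S : Set ℝ := Icc 0 b ∩ y ⁻¹' Ici (M * η) with hSdef
    have hSclosed : IsClosed S :=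
      hcont.preimage_isClosed_of_isClosed isClosed_Icc isClosed_Ici
    have hScompact : IsCompact S :=
      isCompact_Icc.of_isClosed_subset hSclosed inter_subset_left
    have hSne : S.Nonempty := ⟨b, ⟨hb0, le_rfl⟩, hcon⟩
    set c : ℝ := sInf S with hcdef
    have hcS : c ∈ S := hScompact.sInf_mem hSne
    have hc0 : 0 ≤ c := hcS.1.1
    have hcb : c ≤ b := hcS.1.2
    have hcy : M * η ≤ y c := hcS.2
    have hcT : ENNReal.ofReal c < T := lt_of_le_of_lt (ENNReal.ofReal_le_ofReal hcb) hbT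
    have hcpos : 0 < c := by
      rcases hc0.lt_or_eq with h | h
      · exact h
      · exfalso; rw [← h] at hcy; linarith
    have hlt : ∀ t, 0 ≤ t → t < c → y t < M * η := by
      intro t ht0 htc
      by_contra h
      push_neg at h
      have : t ∈ S := ⟨⟨ht0, htc.le.trans hcb⟩, h⟩
      exact absurd (csInf_le hScompact.bddBelow this) (not_le.mpr htc)
    -- integrability on Ioc 0 c
    have hsub : Ioc 0 c ⊆ D := fun t ht =>
      ⟨ht.1, lt_of_le_of_lt (ENNReal.ofReal_le_ofReal ht.2) hcT⟩
    have hy'int : IntegrableOn y' (Ioc 0 c) volume := (hAC 0 c le_rfl hc0 hcT).1.1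
    have hGc : IntegrableOn G (Ioc 0 c) volume := hGint.mono_set hsub
    have hyc : IntegrableOn y (Ioc 0 c) volume := hyint.mono_set hsub
    have hrhs : IntegrableOn (fun t => G t + L * y t) (Ioc 0 c) volume :=
      hGc.add (hyc.const_mul L)
    -- a.e. inequality on Ioc 0 c
    have hnec : ∀ᵐ t ∂(volume : Measure ℝ), t ≠ c := by
      rw [ae_iff]
      have : {t : ℝ | ¬ t ≠ c} = {c} := by ext t; simp
      simp [this]
    have hae : ∀ᵐ t ∂(volume.restrict (Ioc 0 c)), y' t ≤ G t + L * y t := by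
      filter_upwards [ae_restrict_mem measurableSet_Ioc, ae_restrict_of_ae hineq,
        ae_restrict_of_ae hnec] with t ht hti htne
      have ht0 : 0 < t := ht.1
      have htc : t < c := lt_of_le_of_ne ht.2 htne
      have htT : ENNReal.ofReal t < T := (hsub ht).2
      have hyt0 : 0 ≤ y t := hy0 t ht0.le htT
      have hytM : y t < M * η := hlt t ht0.le htc
      have hpow : y t ^ α ≤ r * y t := by
        rcases hyt0.lt_or_eq with hpos | hzero
        · have h1 : y t ^ α = y t ^ (α - 1) * y t := by
            rw [← Real.rpow_add_one (ne_of_gt hpos)]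
            ring_nf
          rw [h1]
          have h2 : y t ^ (α - 1) ≤ r := by
            rw [hrdef]
            exact Real.rpow_le_rpow hyt0 (by rw [hMη] at hytM; linarith [hytM.le]) (by linarith)
          exact mul_le_mul_of_nonneg_right h2 hyt0
        · rw [← hzero, Real.zero_rpow (by linarith), mul_zero]
      have := hti ht0 htT
      nlinarith [this, hpow]
    have hint1 : ∫ t in Ioc 0 c, y' t ≤ ∫ t in Ioc 0 c, (G t + L * y t) :=
      integral_mono_ae hy'int hrhs hae
    have hsplit : ∫ t in Ioc 0 c, (G t + L * y t)
        = (∫ t in Ioc 0 c, G t) + L * ∫ t in Ioc 0 c, y t := by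
      rw [integral_add hGc (hyc.const_mul L), integral_const_mul]
    have hGmono : ∫ t in Ioc 0 c, G t ≤ ∫ s in D, G s :=
      setIntegral_mono_set hGint (ae_of_all _ hG) (HasSubset.Subset.eventuallyLE hsub)
    have hymono : ∫ t in Ioc 0 c, y t ≤ ∫ s in D, y s :=
      setIntegral_mono_set hyint ((ae_restrict_iff' measD).mpr (ae_of_all _ hyD0))
        (HasSubset.Subset.eventuallyLE hsub)
    have hyIoc0 : 0 ≤ ∫ t in Ioc 0 c, y t :=
      setIntegral_nonneg measurableSet_Ioc fun t ht => hyD0 t (hsub ht)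
    have hftc : y c = y 0 + ∫ t in Ioc 0 c, y' t := by
      rw [(hAC 0 c le_rfl hc0 hcT).2, intervalIntegral.integral_of_le hc0]
    -- final contradiction
    have hfin : y c ≤ y 0 + (∫ s in D, G s) + L * ∫ t in Ioc 0 c, y t := by
      rw [hftc]; linarith [hint1, hsplit, hGmono]
    have hLy : L * (∫ t in Ioc 0 c, y t) ≤ L * ∫ s in D, y s :=
      mul_le_mul_of_nonneg_left hymono hL0
    have hKA : y 0 + (∫ s in D, G s) ≤ max 1 L * (y 0 + ∫ s in D, G s) :=
      le_mul_of_one_le_left (by linarith) (le_max_left _ _)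
    have hKB : L * (∫ s in D, y s) ≤ max 1 L * (∫ s in D, y s) :=
      mul_le_mul_of_nonneg_right (le_max_right _ _) hyD
    have hKM : max 1 L < M := max_lt (by linarith) hLM
    have hKη : max 1 L * (y 0 + (∫ s in D, G s) + (∫ s in D, y s)) ≤ max 1 L * η :=
      mul_le_mul_of_nonneg_left hsmall (le_trans zero_le_one (le_max_left _ _))
    have hring : max 1 L * (y 0 + (∫ s in D, G s) + (∫ s in D, y s))
        = max 1 L * (y 0 + ∫ s in D, G s) + max 1 L * (∫ s in D, y s) := by ring
    have hlast : max 1 L * η < M * η := mul_lt_mul_of_pos_right hKM hηpos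
    linarith [hcy, hfin, hLy, hKA, hKB, hKη, hring, hlast]
  refine ⟨?_, key⟩
  refine memLp_top_of_bound hyint.aestronglyMeasurable (M * η) ?_
  refine (ae_restrict_iff' measD).mpr (ae_of_all _ fun t ht => ?_)
  have h1 := hyD0 t ht
  have h2 := key t ht.1.le ht.2
  rw [Real.norm_eq_abs, abs_of_nonneg h1]
  linarith
end

section
/- Let y : [0, ∞) → [0, ∞) be absolutely continuous on compact subintervals, let G ∈ L¹(0, ∞) with G(t) ≥ 0, let c₁, c₂ ∈ [0, ∞) and α > 1, and suppose y′(t) ≤ G(t) + c₁ y(t) + c₂ y(t)^α for almost every t ∈ (0, ∞). Set M := 2·max{1, c₁, c₂}. Then there exists η > 0 (depending only on c₁, c₂, α) such that: if y(0) + ∫₀^∞ G(s) ds + ∫₀^∞ y(s) ds ≤ η, then lim_{t→∞} y(t) = 0. -/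
/-!
Statement 1: Generalized Gronwall lemma (Lemma 4.3 of the paper), decay part:
on `(0,∞)`, if the data are small then `y(t) → 0` as `t → ∞`.
Absolute continuity of `y` on compact subintervals of `[0,∞)` is encoded through the
fundamental theorem of calculus via an a.e. derivative `y'`.
The constant `η` depends only on `c₁, c₂, α`.
-/

open MeasureTheory Set Filter
open scoped Topology

theorem gronwall_decay (c₁ c₂ : ℝ) (hc₁ : 0 ≤ c₁) (hc₂ : 0 ≤ c₂)
    (α : ℝ) (hα : 1 < α) :
    ∃ η > (0 : ℝ), ∀ (y y' G : ℝ → ℝ),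
      -- y takes values in [0,∞)
      (∀ t : ℝ, 0 ≤ t → 0 ≤ y t) →
      -- y is absolutely continuous on compact subintervals of [0,∞),
      -- with a.e. derivative y'
      (∀ a b : ℝ, 0 ≤ a → a ≤ b →
        IntervalIntegrable y' volume a b ∧ y b = y a + ∫ t in a..b, y' t) →
      -- G ≥ 0 and G ∈ L¹(0,∞)
      (∀ t : ℝ, 0 ≤ G t) →
      IntegrableOn G (Ioi (0 : ℝ)) volume →
      -- y ∈ L¹(0,∞)
      IntegrableOn y (Ioi (0 : ℝ)) volume →
      -- the differential inequality, a.e. on (0,∞)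
      (∀ᵐ t ∂volume, 0 < t → y' t ≤ G t + c₁ * y t + c₂ * y t ^ α) →
      -- smallness of the data
      y 0 + (∫ s in Ioi (0 : ℝ), G s) + (∫ s in Ioi (0 : ℝ), y s) ≤ η →
      -- conclusion: y(t) → 0 as t → ∞
      Tendsto y atTop (nhds 0) := by
  have hK : (0:ℝ) < 1 + c₁ + c₂ := by linarith
  refine ⟨1 / (8 * (1 + c₁ + c₂)), by positivity, ?_⟩
  set C := c₁ + c₂ with hCdef
  have hC0 : 0 ≤ C := by simp only [hCdef]; positivity
  set η := 1 / (8 * (1 + c₁ + c₂)) with hηdef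
  clear_value C η
  have hη0 : 0 < η := by rw [hηdef]; positivity
  intro y y' G hy0 hftc hG hGint hyint hode hsmall
  have hGI : 0 ≤ ∫ s in Ioi (0:ℝ), G s :=
    setIntegral_nonneg measurableSet_Ioi fun t _ => hG t
  have hyI : 0 ≤ ∫ s in Ioi (0:ℝ), y s :=
    setIntegral_nonneg measurableSet_Ioi fun t ht => hy0 t (le_of_lt ht)
  have hy00 : 0 ≤ y 0 := hy0 0 le_rfl
  have hy0η : y 0 ≤ η := by linarith
  have hGη : (∫ s in Ioi (0:ℝ), G s) ≤ η := by linarith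
  have hyη : (∫ s in Ioi (0:ℝ), y s) ≤ η := by linarith
  have hgint : IntegrableOn (fun t => G t + C * y t) (Ioi (0:ℝ)) volume :=
    hGint.add (hyint.const_mul C)
  -- key integral estimate, valid whenever y ≤ 1 a.e. on (a, b]
  have key : ∀ a b : ℝ, 0 ≤ a → a ≤ b →
      (∀ᵐ t ∂(volume.restrict (Ioc a b)), y t ≤ 1) →
      y b ≤ y a + ∫ t in Ioc a b, (G t + C * y t) := by
    intro a b ha hab hyle1
    obtain ⟨hint, heq⟩ := hftc a b ha hab
    rw [heq]
    have hsub : Ioc a b ⊆ Ioi (0:ℝ) := fun t ht => lt_of_le_of_lt ha ht.1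
    have hgint' : IntegrableOn (fun t => G t + C * y t) (Ioc a b) volume :=
      hgint.mono_set hsub
    rw [intervalIntegral.integral_of_le hab]
    have hyint' : IntegrableOn y' (Ioc a b) volume :=
      (intervalIntegrable_iff_integrableOn_Ioc_of_le hab).mp hint
    have hmono : ∀ᵐ t ∂(volume.restrict (Ioc a b)), y' t ≤ G t + C * y t := by
      filter_upwards [ae_restrict_mem measurableSet_Ioc, ae_restrict_of_ae hode, hyle1]
        with t htmem hodet hle1
      have ht0 : 0 < t := lt_of_le_of_lt ha htmem.1
      have hyt0 : 0 ≤ y t := hy0 t ht0.le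
      have hpow : y t ^ α ≤ y t := by
        rcases eq_or_lt_of_le hyt0 with h | h
        · rw [← h, Real.zero_rpow (by linarith : α ≠ 0)]
        · calc y t ^ α ≤ y t ^ (1:ℝ) :=
                Real.rpow_le_rpow_of_exponent_ge h hle1 hα.le
            _ = y t := Real.rpow_one _
      have h1 := hodet ht0
      have h2 : c₂ * y t ^ α ≤ c₂ * y t := mul_le_mul_of_nonneg_left hpow hc₂
      simp only [hCdef]
      nlinarith
    have := integral_mono_ae hyint' hgint' hmono
    linarith
  -- subset-integral bound
  have hIocg : ∀ a b : ℝ, 0 ≤ a → (∫ t in Ioc a b, (G t + C * y t))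
      ≤ ∫ t in Ioi a, (G t + C * y t) := by
    intro a b ha
    refine setIntegral_mono_set (hgint.mono_set (Ioi_subset_Ioi ha)) ?_ ?_
    · filter_upwards [ae_restrict_mem measurableSet_Ioi] with t ht
      have h1 : 0 ≤ y t := hy0 t (le_of_lt (lt_of_le_of_lt ha ht))
      have h2 := hG t
      positivity
    · exact HasSubset.Subset.eventuallyLE Ioc_subset_Ioi_self
  have hItail : ∀ a : ℝ, 0 ≤ a →
      (∫ t in Ioi a, (G t + C * y t)) ≤ η + C * η := by
    intro a ha
    have h1 : (∫ t in Ioi a, (G t + C * y t))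
        = (∫ t in Ioi a, G t) + ∫ t in Ioi a, C * y t :=
      integral_add (hGint.mono_set (Ioi_subset_Ioi ha))
        ((hyint.mono_set (Ioi_subset_Ioi ha)).const_mul C)
    have h2 : (∫ t in Ioi a, G t) ≤ ∫ t in Ioi (0:ℝ), G t := by
      refine setIntegral_mono_set hGint ?_
        (HasSubset.Subset.eventuallyLE (Ioi_subset_Ioi ha))
      filter_upwards with t using hG t
    have h3 : (∫ t in Ioi a, y t) ≤ ∫ t in Ioi (0:ℝ), y t := by
      refine setIntegral_mono_set hyint ?_
        (HasSubset.Subset.eventuallyLE (Ioi_subset_Ioi ha))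
      filter_upwards [ae_restrict_mem measurableSet_Ioi] with t ht
      exact hy0 t (le_of_lt ht)
    have h4 : (∫ t in Ioi a, C * y t) = C * ∫ t in Ioi a, y t := integral_const_mul _ _
    have h5 : C * (∫ t in Ioi a, y t) ≤ C * η :=
      mul_le_mul_of_nonneg_left (le_trans h3 hyη) hC0
    calc (∫ t in Ioi a, (G t + C * y t))
        = (∫ t in Ioi a, G t) + C * ∫ t in Ioi a, y t := by rw [h1, h4]
      _ ≤ η + C * η := by linarith
  -- arithmetic: the data are so small that the estimate gives ≤ 1/4
  have hηq : y 0 + (η + C * η) ≤ 1/4 := by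
    have h8 : (0:ℝ) < 8 * (1 + c₁ + c₂) := by positivity
    have hmul : η * (8 * (1 + c₁ + c₂)) = 1 := by
      rw [hηdef]; field_simp
    have hCK : C ≤ 1 + c₁ + c₂ := by simp only [hCdef]; linarith
    nlinarith [mul_le_mul_of_nonneg_left hCK hη0.le]
  have hquarter : ∀ b : ℝ, 0 ≤ b →
      (∀ᵐ t ∂(volume.restrict (Ioc 0 b)), y t ≤ 1) → y b ≤ 1/4 := by
    intro b hb h1
    have h2 := key 0 b le_rfl hb h1
    have h3 := le_trans (hIocg 0 b le_rfl) (hItail 0 le_rfl)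
    have h4 : y b ≤ y 0 + (η + C * η) := le_trans h2 (by linarith)
    linarith [h4, hηq]
  -- global bound y ≤ 1/2 on [0, ∞)
  have hbound : ∀ t : ℝ, 0 ≤ t → y t ≤ 1/2 := by
    by_contra hcon
    push_neg at hcon
    obtain ⟨t₀, ht₀0, ht₀⟩ := hcon
    set S : Set ℝ := {t | 0 ≤ t ∧ 1/2 < y t} with hSdef
    have hSne : S.Nonempty := ⟨t₀, ht₀0, ht₀⟩
    have hSbdd : BddBelow S := ⟨0, fun t ht => ht.1⟩
    set s := sInf S with hsdef
    have hs0 : 0 ≤ s := le_csInf hSne fun t ht => ht.1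
    have hlt : ∀ t : ℝ, 0 ≤ t → t < s → y t ≤ 1/2 := by
      intro t ht hts
      by_contra h
      push_neg at h
      exact absurd (csInf_le hSbdd ⟨ht, h⟩) (not_le.mpr hts)
    have haes : ∀ᵐ t ∂(volume.restrict (Ioc 0 s)), y t ≤ 1 := by
      have hne : ∀ᵐ t ∂(volume : Measure ℝ), t ≠ s := by
        rw [ae_iff]
        simp [measure_singleton s]
      filter_upwards [ae_restrict_mem measurableSet_Ioc, ae_restrict_of_ae hne]
        with t htmem htne
      have htlt : t < s := lt_of_le_of_ne htmem.2 htne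
      linarith [hlt t htmem.1.le htlt]
    have hys : y s ≤ 1/4 := hquarter s hs0 haes
    -- right-continuity of the primitive at s
    have hy'int : IntegrableOn y' (Icc s (s+1)) volume := by
      rw [integrableOn_Icc_iff_integrableOn_Ioc]
      exact (intervalIntegrable_iff_integrableOn_Ioc_of_le (by linarith)).mp
        (hftc s (s+1) hs0 (by linarith)).1
    have hFcont : ContinuousOn (fun x => ∫ t in Ioc s x, y' t) (Icc s (s+1)) :=
      intervalIntegral.continuousOn_primitive hy'int
    have hFs : (∫ t in Ioc s s, y' t) = 0 := by simp
    have hcw : ContinuousWithinAt (fun x => ∫ t in Ioc s x, y' t) (Icc s (s+1)) s :=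
      hFcont s (by constructor <;> linarith)
    rw [Metric.continuousWithinAt_iff] at hcw
    obtain ⟨δ, hδ0, hδ⟩ := hcw (1/8) (by norm_num)
    have hmin : 0 < min δ 1 := lt_min hδ0 one_pos
    obtain ⟨t, htS, htlt⟩ := exists_lt_of_csInf_lt hSne (by linarith : s < s + min δ 1)
    have hst : s ≤ t := csInf_le hSbdd htS
    have htle : t ≤ s + 1 := le_trans htlt.le (by
      have := min_le_right δ 1; linarith)
    have hdist : dist t s < δ := by
      rw [Real.dist_eq, abs_of_nonneg (by linarith)]
      have := min_le_left δ 1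
      linarith
    have hFt := hδ (by constructor <;> linarith) hdist
    rw [hFs, dist_zero_right, Real.norm_eq_abs] at hFt
    have heq := (hftc s t hs0 hst).2
    rw [intervalIntegral.integral_of_le hst] at heq
    have : (1:ℝ)/2 < y t := htS.2
    have habs := le_abs_self (∫ u in Ioc s t, y' u)
    linarith
  -- tail of the linear majorant tends to 0
  have htail : Tendsto (fun a : ℝ => ∫ t in Ioi a, (G t + C * y t)) atTop (𝓝 0) := by
    have h1 : Tendsto (fun b : ℝ => ∫ t in (0:ℝ)..b, (G t + C * y t)) atTop
        (𝓝 (∫ t in Ioi (0:ℝ), (G t + C * y t))) :=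
      intervalIntegral_tendsto_integral_Ioi 0 hgint tendsto_id
    have h2 : Tendsto (fun b : ℝ => (∫ t in Ioi (0:ℝ), (G t + C * y t))
        - ∫ t in (0:ℝ)..b, (G t + C * y t)) atTop (𝓝 0) := by
      have := tendsto_const_nhds (x := ∫ t in Ioi (0:ℝ), (G t + C * y t))
        (f := (atTop : Filter ℝ)) |>.sub h1
      simpa using this
    refine h2.congr' ?_
    filter_upwards [eventually_ge_atTop (0:ℝ)] with b hb
    have hsplit : (∫ t in Ioi (0:ℝ), (G t + C * y t))
        = (∫ t in Ioc 0 b, (G t + C * y t)) + ∫ t in Ioi b, (G t + C * y t) := by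
      rw [← setIntegral_union (Ioc_disjoint_Ioi le_rfl) measurableSet_Ioi
        (hgint.mono_set Ioc_subset_Ioi_self) (hgint.mono_set (Ioi_subset_Ioi hb)),
        Ioc_union_Ioi_eq_Ioi hb]
    rw [intervalIntegral.integral_of_le hb, hsplit]
    ring
  -- conclude
  rw [Metric.tendsto_atTop]
  intro ε hε
  obtain ⟨N, hN⟩ := (Metric.tendsto_atTop.mp htail) (ε/3) (by positivity)
  set T := max N 0 with hTdef
  have hT0 : 0 ≤ T := le_max_right N 0
  have hexa : ∃ a : ℝ, T ≤ a ∧ y a < ε/3 := by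
    by_contra h
    push_neg at h
    have hconst : IntegrableOn (fun _ : ℝ => ε/3) (Ioi T) volume := by
      refine Integrable.mono' (hyint.mono_set (Ioi_subset_Ioi hT0))
        aestronglyMeasurable_const ?_
      filter_upwards [ae_restrict_mem measurableSet_Ioi] with t ht
      rw [Real.norm_eq_abs, abs_of_pos (by positivity)]
      exact h t (le_of_lt ht)
    rcases integrable_const_iff.mp hconst with hc | hc
    · have : ε/3 ≠ 0 := by positivity
      simp_all
    · replace hc := hc.measure_univ_lt_top
      rw [Measure.restrict_apply_univ, Real.volume_Ioi] at hc
      exact absurd hc (by simp)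
  obtain ⟨a, haT, hya⟩ := hexa
  have ha0 : 0 ≤ a := le_trans hT0 haT
  refine ⟨a, fun t hta => ?_⟩
  have hae1 : ∀ᵐ u ∂(volume.restrict (Ioc a t)), y u ≤ 1 := by
    filter_upwards [ae_restrict_mem measurableSet_Ioc] with u hu
    linarith [hbound u (le_trans ha0 hu.1.le)]
  have h1 := key a t ha0 hta hae1
  have h2 := hIocg a t ha0
  have h3 : (∫ u in Ioi a, (G u + C * y u)) ≤ ∫ u in Ioi T, (G u + C * y u) := by
    refine setIntegral_mono_set (hgint.mono_set (Ioi_subset_Ioi hT0)) ?_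
      (HasSubset.Subset.eventuallyLE (Ioi_subset_Ioi haT))
    filter_upwards [ae_restrict_mem measurableSet_Ioi] with u hu
    have hG' := hG u
    have hy' : 0 ≤ y u := hy0 u (le_trans hT0 hu.le)
    positivity
  have h4 := hN T (le_max_left N 0)
  rw [Real.dist_eq, sub_zero] at h4
  have h5 := le_abs_self (∫ u in Ioi T, (G u + C * y u))
  have h6 : 0 ≤ y t := hy0 t (le_trans ha0 hta)
  rw [Real.dist_eq, sub_zero, abs_of_nonneg h6]
  linarith
end

section
/- Let y : [0, ∞) → [0, ∞) be absolutely continuous on compact subintervals, let G ∈ L¹(0, ∞) with G(t) ≥ 0 and with t ↦ t·G(t) also in L¹(0, ∞), let c₂ ∈ [0, ∞) and α ≥ 2, and suppose y′(t) ≤ G(t) + c₂ y(t)^α for almost every t ∈ (0, ∞). Set M := 2·max{1, c₂}. Then there exists η > 0 (depending only on c₂, α) such that: if y(0) + ∫₀^∞ G(s) ds + ∫₀^∞ y(s) ds ≤ η, then sup_{t ∈ (0, ∞)} t·y(t) < ∞, i.e. y(t) = O(t⁻¹) as t → ∞. -/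
/-!
Statement 2: Generalized Gronwall lemma (Lemma 4.3 of the paper), third part
(rate of decay, case `c₁ = 0`): if moreover `t ↦ t·G(t) ∈ L¹(0,∞)` and `α ≥ 2`,
then `sup_{t>0} t·y(t) < ∞`, i.e. `y(t) = O(t⁻¹)` as `t → ∞`.
Absolute continuity of `y` on compact subintervals of `[0,∞)` is encoded through
the fundamental theorem of calculus via an a.e. derivative `y'`.
The constant `η` depends only on `c₂, α`.
-/

open MeasureTheory Set Filter


set_option maxHeartbeats 1000000

-- u^α ≤ B^(α-1) * u when 0 ≤ u ≤ B, 1 ≤ α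
lemma aux_rpow_bound {u B α : ℝ} (hu : 0 ≤ u) (huB : u ≤ B) (hα : 1 ≤ α) :
    u ^ α ≤ B ^ (α - 1) * u := by
  rcases eq_or_lt_of_le hu with h | h
  · rw [← h, Real.zero_rpow (by linarith), mul_zero]
  · have h1 : u ^ α = u ^ (α - 1) * u := by
      have h2 : u ^ ((α - 1) + 1) = u ^ (α - 1) * u ^ (1 : ℝ) := Real.rpow_add h _ _
      simpa [Real.rpow_one, sub_add_cancel] using h2
    rw [h1]
    exact mul_le_mul_of_nonneg_right
      (Real.rpow_le_rpow hu huB (by linarith)) hu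


theorem gronwall_decay_rate (c₂ : ℝ) (hc₂ : 0 ≤ c₂) (α : ℝ) (hα : 2 ≤ α) :
    ∃ η > (0 : ℝ), ∀ (y y' G : ℝ → ℝ),
      -- y takes values in [0,∞)
      (∀ t : ℝ, 0 ≤ t → 0 ≤ y t) →
      -- y is absolutely continuous on compact subintervals of [0,∞),
      -- with a.e. derivative y'
      (∀ a b : ℝ, 0 ≤ a → a ≤ b →
        IntervalIntegrable y' volume a b ∧ y b = y a + ∫ t in a..b, y' t) →
      -- G ≥ 0, G ∈ L¹(0,∞) and t·G(t) ∈ L¹(0,∞)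
      (∀ t : ℝ, 0 ≤ G t) →
      IntegrableOn G (Ioi (0 : ℝ)) volume →
      IntegrableOn (fun t => t * G t) (Ioi (0 : ℝ)) volume →
      -- y ∈ L¹(0,∞)
      IntegrableOn y (Ioi (0 : ℝ)) volume →
      -- the differential inequality (with c₁ = 0), a.e. on (0,∞)
      (∀ᵐ t ∂volume, 0 < t → y' t ≤ G t + c₂ * y t ^ α) →
      -- smallness of the data
      y 0 + (∫ s in Ioi (0 : ℝ), G s) + (∫ s in Ioi (0 : ℝ), y s) ≤ η →
      -- conclusion: sup_{t ∈ (0,∞)} t·y(t) < ∞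
      ∃ A : ℝ, ∀ t : ℝ, 0 < t → t * y t ≤ A := by

  refine ⟨(8 * (1 + c₂))⁻¹, by positivity, ?_⟩
  set η : ℝ := (8 * (1 + c₂))⁻¹ with hηdef
  have hη : 0 < η := by positivity
  intro y y' G hy0 hFTC hG hGint htGint hyint hode hsmall
  -- basic positivity facts
  have hy00 : 0 ≤ y 0 := hy0 0 le_rfl
  have hGI0 : 0 ≤ ∫ s in Ioi (0:ℝ), G s :=
    setIntegral_nonneg measurableSet_Ioi fun s _ => hG s
  have hyI0 : 0 ≤ ∫ s in Ioi (0:ℝ), y s :=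
    setIntegral_nonneg measurableSet_Ioi fun s hs => hy0 s (le_of_lt hs)
  have hy0η : y 0 ≤ η := by linarith
  have hGη : (∫ s in Ioi (0:ℝ), G s) ≤ η := by linarith
  have hyη : (∫ s in Ioi (0:ℝ), y s) ≤ η := by linarith
  have h8 : (0:ℝ) < 8 * (1 + c₂) := by positivity
  have hcη : 2 * c₂ * η ≤ 1/4 := by
    rw [hηdef, inv_eq_one_div, mul_one_div, div_le_div_iff₀ h8 (by norm_num)]
    nlinarith
  have h2η1 : 2 * η ≤ 1 := by
    rw [hηdef, inv_eq_one_div, mul_one_div, div_le_one h8]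
    nlinarith
  -- continuity of y on [0,∞)
  have ycont : ContinuousOn y (Ici 0) := by
    intro t ht
    have htB : t < t + 1 := by linarith
    have h1 : IntervalIntegrable y' volume 0 (t+1) :=
      (hFTC 0 (t+1) le_rfl (by simp at ht ⊢; linarith)).1
    have h2 : IntegrableOn y' (Icc 0 (t+1)) volume := by
      rw [integrableOn_Icc_iff_integrableOn_Ioc]
      simpa [intervalIntegrable_iff_integrableOn_Ioc_of_le
        (show (0:ℝ) ≤ t+1 by simp at ht; linarith)] using h1
    have h3 : ContinuousOn (fun x => ∫ s in (0:ℝ)..x, y' s) (Icc 0 (t+1)) := by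
      have := intervalIntegral.continuousOn_primitive_interval
        (f := y') (a := (0:ℝ)) (b := t+1) (μ := volume) (by
          rwa [uIcc_of_le (by simp at ht; linarith)])
      rwa [uIcc_of_le (by simp at ht; linarith)] at this
    have h4 : ContinuousOn y (Icc 0 (t+1)) := by
      apply ((continuousOn_const.add h3).congr)
      intro s hs
      exact (hFTC 0 s le_rfl hs.1).2
    have h5 : ContinuousWithinAt y (Icc 0 (t+1)) t := h4 t ⟨ht, by linarith⟩
    apply h5.mono_of_mem_nhdsWithin
    rw [mem_nhdsWithin_iff_exists_mem_nhds_inter]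
    exact ⟨Iio (t+1), Iio_mem_nhds htB, fun x hx => ⟨hx.2, hx.1.le⟩⟩
  -- integrability of y^α on compact subintervals of [0,∞)
  have hrpowint : ∀ a b : ℝ, 0 ≤ a → IntegrableOn (fun s => y s ^ α) (Ioc a b) volume := by
    intro a b ha
    rcases le_or_gt a b with hab | hab
    · have hc : ContinuousOn (fun s => y s ^ α) (Icc a b) := by
        apply ContinuousOn.rpow_const
        · exact ycont.mono (fun x hx => le_trans ha hx.1)
        · intro x _; right; linarith
      exact ((integrableOn_Icc_iff_integrableOn_Ioc).mp hc.integrableOn_Icc)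
    · simp [Ioc_eq_empty (not_lt.mpr hab.le)]
  have hyintc : ∀ a b : ℝ, 0 ≤ a → IntegrableOn y (Ioc a b) volume := by
    intro a b ha
    rcases le_or_gt a b with hab | hab
    · exact ((integrableOn_Icc_iff_integrableOn_Ioc).mp
        ((ycont.mono (fun x hx => le_trans ha hx.1)).integrableOn_Icc))
    · simp [Ioc_eq_empty (not_lt.mpr hab.le)]
  have hrhsint : ∀ a b : ℝ, 0 ≤ a →
      IntegrableOn (fun s => G s + c₂ * y s ^ α) (Ioc a b) volume := by
    intro a b ha
    exact (hGint.mono_set (fun x hx => lt_of_le_of_lt ha hx.1)).add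
      ((hrpowint a b ha).const_mul c₂)
  -- key integral inequality
  have key : ∀ a b : ℝ, 0 ≤ a → a ≤ b →
      y b ≤ y a + ∫ s in Ioc a b, (G s + c₂ * y s ^ α) := by
    intro a b ha hab
    obtain ⟨hint, heq⟩ := hFTC a b ha hab
    rw [heq, intervalIntegral.integral_of_le hab]
    have hmono : (∫ s in Ioc a b, y' s) ≤ ∫ s in Ioc a b, (G s + c₂ * y s ^ α) := by
      apply setIntegral_mono_ae_restrict
      · exact hint.def'.mono_set (by rw [uIoc_of_le hab])
      · exact hrhsint a b ha
      · filter_upwards [ae_restrict_of_ae hode, ae_restrict_mem measurableSet_Ioc]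
          with s hs hmem
        exact hs (lt_of_le_of_lt ha hmem.1)
    linarith
  -- Step 1: uniform bound y ≤ 2η on [0,∞)
  have step1 : ∀ t : ℝ, 0 ≤ t → y t ≤ 2 * η := by
    by_contra hcon
    push_neg at hcon
    obtain ⟨t₀, ht₀, ht₀'⟩ := hcon
    set C : Set ℝ := {t | 0 ≤ t ∧ 2 * η ≤ y t} with hC
    have hCc : IsClosed C := by
      have : C = Ici 0 ∩ y ⁻¹' (Ici (2*η)) := by
        ext x; simp [hC, and_comm]
      rw [this]
      exact ycont.preimage_isClosed_of_isClosed isClosed_Ici isClosed_Ici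
    have hCne : C.Nonempty := ⟨t₀, ht₀, ht₀'.le⟩
    have hCbd : BddBelow C := ⟨0, fun x hx => hx.1⟩
    set T := sInf C with hT
    have hTC : T ∈ C := hCc.csInf_mem hCne hCbd
    have hT0 : 0 ≤ T := hTC.1
    have hTy : 2 * η ≤ y T := hTC.2
    have hlt : ∀ s : ℝ, 0 ≤ s → s < T → y s ≤ 2 * η := by
      intro s hs hsT
      by_contra h
      exact absurd (csInf_le hCbd ⟨hs, (not_le.mp h).le⟩) (not_le.mpr hsT)
    have hkey := key 0 T le_rfl hT0
    have hsplit : (∫ s in Ioc 0 T, (G s + c₂ * y s ^ α))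
        = (∫ s in Ioc 0 T, G s) + c₂ * ∫ s in Ioc 0 T, y s ^ α := by
      rw [integral_add (hGint.mono_set (fun x hx => hx.1)) ((hrpowint 0 T le_rfl).const_mul c₂),
        integral_const_mul]
    have hGle : (∫ s in Ioc 0 T, G s) ≤ ∫ s in Ioi (0:ℝ), G s := by
      apply setIntegral_mono_set hGint
      · filter_upwards [ae_restrict_mem measurableSet_Ioi] with s _ using hG s
      · exact Eventually.of_forall (fun x hx => hx.1)
    have hpow : (∫ s in Ioc 0 T, y s ^ α) ≤ (2*η) ^ (α - 1) * ∫ s in Ioi (0:ℝ), y s := by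
      rw [integral_Ioc_eq_integral_Ioo]
      have h1 : (∫ s in Ioo 0 T, y s ^ α) ≤ ∫ s in Ioo 0 T, (2*η) ^ (α - 1) * y s := by
        apply setIntegral_mono_on
        · exact (hrpowint 0 T le_rfl).mono_set Ioo_subset_Ioc_self
        · exact ((hyintc 0 T le_rfl).mono_set Ioo_subset_Ioc_self).const_mul _
        · exact measurableSet_Ioo
        · intro s hs
          exact aux_rpow_bound (hy0 s hs.1.le) (hlt s hs.1.le hs.2) (by linarith)
      rw [integral_const_mul] at h1
      refine le_trans h1 (mul_le_mul_of_nonneg_left ?_ (by positivity))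
      apply setIntegral_mono_set (hyint)
      · filter_upwards [ae_restrict_mem measurableSet_Ioi] with s hs using hy0 s hs.le
      · exact Eventually.of_forall (fun x hx => hx.1)
    have hexp : (2*η) ^ (α - 1) ≤ 2*η := by
      calc (2*η) ^ (α-1) ≤ (2*η) ^ (1:ℝ) :=
            Real.rpow_le_rpow_of_exponent_ge (by positivity) h2η1 (by linarith)
        _ = 2*η := Real.rpow_one _
    have hIy : (∫ s in Ioi (0:ℝ), y s) ≤ η := hyη
    have hfin : y T ≤ η + η / 4 := by
      have h2 : c₂ * ((2*η) ^ (α-1) * ∫ s in Ioi (0:ℝ), y s) ≤ η / 4 := by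
        have hb : (2*η)^(α-1) * (∫ s in Ioi (0:ℝ), y s) ≤ (2*η) * η := by
          apply mul_le_mul hexp hIy hyI0 (by positivity)
        calc c₂ * ((2*η) ^ (α-1) * ∫ s in Ioi (0:ℝ), y s) ≤ c₂ * ((2*η)*η) :=
              mul_le_mul_of_nonneg_left hb hc₂
          _ = (2*c₂*η)*η := by ring
          _ ≤ (1/4)*η := mul_le_mul_of_nonneg_right hcη hη.le
          _ = η/4 := by ring
      have h3 : c₂ * (∫ s in Ioc 0 T, y s ^ α) ≤ η / 4 := by
        refine le_trans ?_ h2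
        exact mul_le_mul_of_nonneg_left hpow hc₂
      calc y T ≤ y 0 + ((∫ s in Ioc 0 T, G s) + c₂ * ∫ s in Ioc 0 T, y s ^ α) := by
            rw [← hsplit]; exact hkey
        _ ≤ η + η/4 := by
            have := hy0η
            have h4 : y 0 + (∫ s in Ioc 0 T, G s) ≤ η := by
              have : y 0 + (∫ s in Ioi (0:ℝ), G s) ≤ η := by linarith
              linarith [hGle]
            linarith
    linarith
  -- Step 2: decay rate
  set Iy : ℝ := ∫ s in Ioi (0:ℝ), y s with hIydef
  set IsG : ℝ := ∫ s in Ioi (0:ℝ), s * G s with hIsGdef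
  have hIsG0 : 0 ≤ IsG :=
    setIntegral_nonneg measurableSet_Ioi fun s hs => mul_nonneg hs.le (hG s)
  set K : ℝ := 2*(2*Iy + 2*IsG) + 2 with hKdef
  have hK0 : 0 < K := by rw [hKdef]; have := hyI0; positivity
  have step2 : ∀ t : ℝ, 0 ≤ t → t * y t ≤ K := by
    by_contra hcon
    push_neg at hcon
    obtain ⟨t₀, ht₀, ht₀'⟩ := hcon
    set C : Set ℝ := {t | 0 ≤ t ∧ K ≤ t * y t} with hC
    have hCc : IsClosed C := by
      have : C = Ici 0 ∩ (fun t => t * y t) ⁻¹' (Ici K) := by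
        ext x; simp [hC, and_comm]
      rw [this]
      exact (continuousOn_id.mul ycont).preimage_isClosed_of_isClosed
        isClosed_Ici isClosed_Ici
    have hCne : C.Nonempty := ⟨t₀, ht₀, ht₀'.le⟩
    have hCbd : BddBelow C := ⟨0, fun x hx => hx.1⟩
    set T := sInf C with hT
    have hTC : T ∈ C := hCc.csInf_mem hCne hCbd
    have hT0 : 0 ≤ T := hTC.1
    have hTy : K ≤ T * y T := hTC.2
    have hTpos : 0 < T := by
      rcases eq_or_lt_of_le hT0 with h | h
      · exfalso; rw [← h] at hTy; simp at hTy; linarith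
      · exact h
    have hhalf : (0:ℝ) < T/2 := by linarith
    have hlt : ∀ s : ℝ, 0 ≤ s → s < T → s * y s ≤ K := by
      intro s hs hsT
      by_contra h
      exact absurd (csInf_le hCbd ⟨hs, (not_le.mp h).le⟩) (not_le.mpr hsT)
    -- min of y on [T/2, T]
    obtain ⟨s₀, hs₀mem, hs₀min⟩ := (isCompact_Icc (a := T/2) (b := T)).exists_isMinOn
      (nonempty_Icc.mpr (by linarith)) (ycont.mono (fun x hx => le_trans hhalf.le hx.1))
    have hs₀0 : 0 ≤ s₀ := le_trans hhalf.le hs₀mem.1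
    -- average bound: (T/2) * y s₀ ≤ Iy
    have hmin : T/2 * y s₀ ≤ Iy := by
      have h1 : (∫ _s in Ioc (T/2) T, y s₀) ≤ ∫ s in Ioc (T/2) T, y s := by
        apply setIntegral_mono_on
        · exact integrableOn_const measure_Ioc_lt_top.ne
        · exact hyintc _ _ hhalf.le
        · exact measurableSet_Ioc
        · exact fun s hs => hs₀min ⟨hs.1.le, hs.2⟩
      rw [setIntegral_const, measureReal_def, Real.volume_Ioc, smul_eq_mul,
        ENNReal.toReal_ofReal (by linarith)] at h1
      have h2 : (∫ s in Ioc (T/2) T, y s) ≤ Iy := by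
        apply setIntegral_mono_set hyint
        · filter_upwards [ae_restrict_mem measurableSet_Ioi] with s hs using hy0 s hs.le
        · exact Eventually.of_forall (fun x hx => lt_trans hhalf hx.1)
      calc T/2 * y s₀ = (T - T/2) * y s₀ := by ring_nf
        _ ≤ ∫ s in Ioc (T/2) T, y s := h1
        _ ≤ Iy := h2
    -- key inequality from s₀ to T
    have hkey : y T ≤ y s₀ + ∫ s in Ioc (T/2) T, (G s + c₂ * y s ^ α) := by
      refine le_trans (key s₀ T hs₀0 hs₀mem.2) (add_le_add_right ?_ _)
      apply setIntegral_mono_set (hrhsint _ _ hhalf.le)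
      · filter_upwards [ae_restrict_mem measurableSet_Ioc] with s hs
        have hy' : 0 ≤ y s := hy0 s (le_trans hhalf.le hs.1.le)
        exact add_nonneg (hG s) (mul_nonneg hc₂ (Real.rpow_nonneg hy' α))
      · exact Eventually.of_forall (fun x hx => Ioc_subset_Ioc_left hs₀mem.1 hx)
    have hsplit : (∫ s in Ioc (T/2) T, (G s + c₂ * y s ^ α))
        = (∫ s in Ioc (T/2) T, G s) + c₂ * ∫ s in Ioc (T/2) T, y s ^ α := by
      rw [integral_add (hGint.mono_set (fun x hx => lt_trans hhalf hx.1))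
        ((hrpowint _ _ hhalf.le).const_mul c₂), integral_const_mul]
    -- bound T * ∫ G
    have hTG : T * (∫ s in Ioc (T/2) T, G s) ≤ 2 * IsG := by
      have h1 : (∫ s in Ioc (T/2) T, T * G s) ≤ ∫ s in Ioc (T/2) T, 2 * (s * G s) := by
        apply setIntegral_mono_on
        · exact (hGint.mono_set (fun x hx => lt_trans hhalf hx.1)).const_mul T
        · exact (htGint.mono_set (fun x hx => lt_trans hhalf hx.1)).const_mul 2
        · exact measurableSet_Ioc
        · intro s hs
          have : T ≤ 2 * s := by have := hs.1; linarith
          have := mul_le_mul_of_nonneg_right this (hG s)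
          linarith [this]
      rw [integral_const_mul, integral_const_mul] at h1
      have h2 : (∫ s in Ioc (T/2) T, s * G s) ≤ IsG := by
        apply setIntegral_mono_set htGint
        · filter_upwards [ae_restrict_mem measurableSet_Ioi] with s hs
          exact mul_nonneg hs.le (hG s)
        · exact Eventually.of_forall (fun x hx => lt_trans hhalf hx.1)
      nlinarith
    -- bound c₂ * T * ∫ y^α
    have hTpow : c₂ * (T * (∫ s in Ioc (T/2) T, y s ^ α)) ≤ K / 4 := by
      have hexp2 : (2*η) ^ (α - 2) ≤ 1 :=
        Real.rpow_le_one (by positivity) h2η1 (by linarith)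
      have h1 : (∫ s in Ioo (T/2) T, T * y s ^ α)
          ≤ ∫ s in Ioo (T/2) T, (2 * (2*η)^(α-2) * K) * y s := by
        apply setIntegral_mono_on
        · exact ((hrpowint _ _ hhalf.le).mono_set Ioo_subset_Ioc_self).const_mul T
        · exact ((hyintc _ _ hhalf.le).mono_set Ioo_subset_Ioc_self).const_mul _
        · exact measurableSet_Ioo
        · intro s hs
          have hs0 : 0 < s := lt_trans hhalf hs.1
          have hu0 : 0 ≤ y s := hy0 s hs0.le
          have hu2η : y s ≤ 2*η := step1 s hs0.le
          have hzK : s * y s ≤ K := hlt s hs0.le hs.2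
          have haux : y s ^ (α - 1) ≤ (2*η) ^ (α - 2) * y s := by
            have := aux_rpow_bound hu0 hu2η (show (1:ℝ) ≤ α - 1 by linarith)
            have he : α - 1 - 1 = α - 2 := by ring
            rwa [he] at this
          have hsplit2 : y s ^ α = y s ^ (α - 1) * y s := by
            rcases eq_or_lt_of_le hu0 with h | h
            · rw [← h, Real.zero_rpow (by linarith), Real.zero_rpow (by linarith), zero_mul]
            · have h2 : y s ^ ((α - 1) + 1) = y s ^ (α - 1) * y s ^ (1:ℝ) :=
                Real.rpow_add h _ _
              simpa [Real.rpow_one, sub_add_cancel] using h2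
          have hT2s : T ≤ 2 * s := by have := hs.1; linarith
          calc T * y s ^ α ≤ (2*s) * y s ^ α := by
                apply mul_le_mul_of_nonneg_right hT2s (Real.rpow_nonneg hu0 α)
            _ = 2 * ((y s ^ (α-1)) * (s * y s)) := by rw [hsplit2]; ring
            _ ≤ 2 * (((2*η)^(α-2) * y s) * K) := by
                apply mul_le_mul_of_nonneg_left _ (by norm_num)
                apply mul_le_mul haux hzK (by positivity)
                positivity
            _ = (2 * (2*η)^(α-2) * K) * y s := by ring
      rw [integral_const_mul, integral_const_mul] at h1
      have h2 : (∫ s in Ioo (T/2) T, y s) ≤ Iy := by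
        apply setIntegral_mono_set hyint
        · filter_upwards [ae_restrict_mem measurableSet_Ioi] with s hs using hy0 s hs.le
        · exact Eventually.of_forall (fun x hx => lt_trans hhalf hx.1)
      have hIooIoc : (∫ s in Ioc (T/2) T, y s ^ α) = ∫ s in Ioo (T/2) T, y s ^ α :=
        integral_Ioc_eq_integral_Ioo
      have h3 : T * (∫ s in Ioc (T/2) T, y s ^ α) ≤ 2 * (2*η)^(α-2) * K * Iy := by
        rw [hIooIoc]
        refine le_trans h1 ?_
        have hk2 : 0 ≤ 2 * (2*η)^(α-2) * K := by positivity
        exact mul_le_mul_of_nonneg_left h2 hk2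
      have h4 : c₂ * (2 * (2*η)^(α-2) * K * Iy) ≤ K/4 := by
        have hIyb : Iy ≤ η := hyη
        have hb1 : c₂ * (2 * (2*η)^(α-2) * K * Iy) ≤ c₂ * (2 * 1 * K * η) := by
          apply mul_le_mul_of_nonneg_left _ hc₂
          have : 2 * (2*η)^(α-2) * K * Iy ≤ 2 * 1 * K * Iy := by
            apply mul_le_mul_of_nonneg_right _ hyI0
            apply mul_le_mul_of_nonneg_right _ hK0.le
            nlinarith
          refine le_trans this ?_
          apply mul_le_mul_of_nonneg_left hIyb (by positivity)
        have : c₂ * (2 * 1 * K * η) = (2 * c₂ * η) * K := by ring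
        rw [this] at hb1
        refine le_trans hb1 ?_
        calc (2 * c₂ * η) * K ≤ (1/4) * K := mul_le_mul_of_nonneg_right hcη hK0.le
          _ = K/4 := by ring
      calc c₂ * (T * (∫ s in Ioc (T/2) T, y s ^ α)) ≤ c₂ * (2 * (2*η)^(α-2) * K * Iy) :=
            mul_le_mul_of_nonneg_left h3 hc₂
        _ ≤ K/4 := h4
    -- combine
    have hcomb : T * y T ≤ 2 * Iy + 2 * IsG + K/4 := by
      have hys₀ : T * y s₀ ≤ 2 * Iy := by nlinarith [hy0 s₀ hs₀0]
      have := mul_le_mul_of_nonneg_left hkey hT0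
      rw [hsplit, mul_add, mul_add] at this
      have hc2nn : 0 ≤ c₂ * (∫ s in Ioc (T/2) T, y s ^ α) := by
        apply mul_nonneg hc₂
        apply setIntegral_nonneg measurableSet_Ioc
        intro s hs
        exact Real.rpow_nonneg (hy0 s (le_trans hhalf.le hs.1.le)) α
      have hrw : T * (c₂ * (∫ s in Ioc (T/2) T, y s ^ α))
          = c₂ * (T * (∫ s in Ioc (T/2) T, y s ^ α)) := by ring
      rw [hrw] at this
      linarith
    rw [hKdef] at hTy hcomb
    linarith
  exact ⟨K, fun t ht => step2 t ht.le⟩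
end
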